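/- arXiv:2604.00569 — 3 statements merged into one kernel-verified Lean document; each statement's English description precedes it below -/
import Mathlib

section
/- Let f : ℝⁿ → ℝ be convex, differentiable, and L-smooth with L > 0, and let x⋆ be a global minimizer of f. Let {x^k}, {y^k}, {t_k}, {f̂^k} be generated by the accelerated proximal bundle method (APBM) with models f̂^k satisfying Assumption 1. Then for every k ≥ 1, f(x^k) − f(x⋆) ≤ L‖x⁰ − x⋆‖² / (2 t_k²). -/
open scoped RealInnerProductSpace

section Aux

variable {E : Type*} [NormedAddCommGroup E] [InnerProductSpace ℝ E] [CompleteSpace E]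

/-- Descent lemma for an `L`-smooth function. -/
lemma apbm_descent {L : ℝ} (hL : 0 < L) (f : E → ℝ)
    (hdiff : Differentiable ℝ f)
    (hsmooth : ∀ u v, ‖gradient f u - gradient f v‖ ≤ L * ‖u - v‖) (a b : E) :
    f b ≤ f a + ⟪gradient f a, b - a⟫ + L / 2 * ‖b - a‖ ^ 2 := by
  set d := b - a with hd
  set c1 : ℝ := ⟪gradient f a, d⟫ with hc1
  set c2 : ℝ := L / 2 * ‖d‖ ^ 2 with hc2
  set g : ℝ → ℝ := fun s => f (a + s • d) - s * c1 - s ^ 2 * c2 with hg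
  have hc : ∀ s : ℝ, HasDerivAt (fun s : ℝ => a + s • d) d s := by
    intro s
    simpa using ((hasDerivAt_id s).smul_const d).const_add a
  have hf' : ∀ s : ℝ, HasDerivAt (fun s : ℝ => f (a + s • d))
      ⟪gradient f (a + s • d), d⟫ s := by
    intro s
    have h1 : HasFDerivAt f
        (InnerProductSpace.toDual ℝ E (gradient f (a + s • d))) (a + s • d) :=
      hasGradientAt_iff_hasFDerivAt.mp (hdiff _).hasGradientAt
    exact h1.comp_hasDerivAt s (hc s)
  have hg' : ∀ s : ℝ, HasDerivAt g
      (⟪gradient f (a + s • d), d⟫ - c1 - (↑2 * s ^ 1) * c2) s := by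
    intro s
    exact ((hf' s).sub (by simpa using (hasDerivAt_id s).mul_const c1)).sub
      ((hasDerivAt_pow 2 s).mul_const c2)
  have hanti : AntitoneOn g (Set.Icc (0 : ℝ) 1) := by
    apply antitoneOn_of_deriv_nonpos (convex_Icc 0 1)
    · exact fun s _ => (hg' s).differentiableAt.continuousAt.continuousWithinAt
    · exact fun s _ => (hg' s).differentiableAt.differentiableWithinAt
    · intro s hs
      rw [interior_Icc] at hs
      rw [(hg' s).deriv]
      have hCS : ⟪gradient f (a + s • d) - gradient f a, d⟫
          ≤ ‖gradient f (a + s • d) - gradient f a‖ * ‖d‖ := real_inner_le_norm _ _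
      have hsm : ‖gradient f (a + s • d) - gradient f a‖ ≤ L * (s * ‖d‖) := by
        have := hsmooth (a + s • d) a
        simpa [norm_smul, abs_of_pos hs.1] using this
      push_cast
      simp only [pow_one]
      have hinner : ⟪gradient f (a + s • d), d⟫ - c1
          ≤ L * (s * ‖d‖) * ‖d‖ := by
        rw [hc1, ← inner_sub_left]
        calc ⟪gradient f (a + s • d) - gradient f a, d⟫
            ≤ ‖gradient f (a + s • d) - gradient f a‖ * ‖d‖ := hCS
          _ ≤ L * (s * ‖d‖) * ‖d‖ := by
              apply mul_le_mul_of_nonneg_right hsm (norm_nonneg _)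
      have : 2 * s * c2 = L * (s * ‖d‖) * ‖d‖ := by
        rw [hc2]; ring
      linarith
  have h01 : g 1 ≤ g 0 :=
    hanti (Set.left_mem_Icc.2 zero_le_one) (Set.right_mem_Icc.2 zero_le_one) zero_le_one
  have he1 : a + (1 : ℝ) • d = b := by rw [hd]; simp
  have he0 : a + (0 : ℝ) • d = a := by simp
  simp only [hg, he1, he0, one_pow, one_mul] at h01
  linarith

/-- Convex combination identity for squared norms. -/
lemma apbm_combo (u v : E) (θ : ℝ) :
    ‖θ • u + (1 - θ) • v‖ ^ 2
      = θ * ‖u‖ ^ 2 + (1 - θ) * ‖v‖ ^ 2 - θ * (1 - θ) * ‖u - v‖ ^ 2 := by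
  have H : ∀ w : E, ‖w‖ ^ 2 = ⟪w, w⟫ := fun w => (real_inner_self_eq_norm_sq w).symm
  rw [H, H, H, H]
  simp only [inner_add_left, inner_add_right, inner_sub_left, inner_sub_right,
    real_inner_smul_left, real_inner_smul_right, real_inner_comm u v]
  ring

/-- Strong minimality of the prox subproblem. -/
lemma apbm_prox_strong {L : ℝ} (hL : 0 < L) (φ : E → ℝ)
    (hφ : ConvexOn ℝ Set.univ φ) (y xm : E)
    (hmin : ∀ z, φ xm + L / 2 * ‖xm - y‖ ^ 2 ≤ φ z + L / 2 * ‖z - y‖ ^ 2) :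
    ∀ z, φ xm + L / 2 * ‖xm - y‖ ^ 2 + L / 2 * ‖z - xm‖ ^ 2
      ≤ φ z + L / 2 * ‖z - y‖ ^ 2 := by
  intro z
  have key : ∀ θ : ℝ, 0 < θ → θ ≤ 1 →
      φ xm + L / 2 * ‖xm - y‖ ^ 2 + L / 2 * ‖z - xm‖ ^ 2
        ≤ φ z + L / 2 * ‖z - y‖ ^ 2 + θ * (L / 2 * ‖z - xm‖ ^ 2) := by
    intro θ hθ hθ1
    set w : E := θ • z + (1 - θ) • xm with hw
    have hcvx : φ w ≤ θ * φ z + (1 - θ) * φ xm :=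
      hφ.2 (Set.mem_univ z) (Set.mem_univ xm) (le_of_lt hθ) (by linarith) (by linarith)
    have hwy : w - y = θ • (z - y) + (1 - θ) • (xm - y) := by
      rw [hw]; module
    have hnorm : ‖w - y‖ ^ 2
        = θ * ‖z - y‖ ^ 2 + (1 - θ) * ‖xm - y‖ ^ 2 - θ * (1 - θ) * ‖z - xm‖ ^ 2 := by
      rw [hwy]
      have := apbm_combo (z - y) (xm - y) θ
      simpa [sub_sub_sub_cancel_right] using this
    have hm := hmin w
    have hθpos : (0:ℝ) < θ := hθ
    nlinarith [hm, hcvx, hnorm, sq_nonneg (θ * ‖z - xm‖)]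
  rcases eq_or_lt_of_le (by positivity : (0:ℝ) ≤ L / 2 * ‖z - xm‖ ^ 2) with hc0 | hcpos
  · have := key 1 one_pos le_rfl
    rw [← hc0] at this ⊢
    linarith
  · apply le_of_forall_pos_le_add
    intro ε hε
    set θ : ℝ := min 1 (ε / (L / 2 * ‖z - xm‖ ^ 2)) with hθdef
    have hθpos : 0 < θ := lt_min one_pos (div_pos hε hcpos)
    have hθ1 : θ ≤ 1 := min_le_left _ _
    have := key θ hθpos hθ1
    have hbound : θ * (L / 2 * ‖z - xm‖ ^ 2) ≤ ε := by
      calc θ * (L / 2 * ‖z - xm‖ ^ 2)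
          ≤ (ε / (L / 2 * ‖z - xm‖ ^ 2)) * (L / 2 * ‖z - xm‖ ^ 2) :=
            mul_le_mul_of_nonneg_right (min_le_right _ _) (le_of_lt hcpos)
        _ = ε := div_mul_cancel₀ ε (ne_of_gt hcpos)
    linarith

end Aux

/-- Theorem 1 (APBM convergence rate in terms of `t k`):
for every `k ≥ 1`, `f(x^k) − f(x⋆) ≤ L‖x⁰ − x⋆‖² / (2 t_k²)`. -/
theorem apbm_rate_tk {n : ℕ} {L : ℝ} (hL : 0 < L)
    (f : EuclideanSpace ℝ (Fin n) → ℝ)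
    (hconv : ConvexOn ℝ Set.univ f)
    (hdiff : Differentiable ℝ f)
    (hsmooth : ∀ u v, ‖gradient f u - gradient f v‖ ≤ L * ‖u - v‖)
    (xstar : EuclideanSpace ℝ (Fin n)) (hmin : ∀ z, f xstar ≤ f z)
    (x y : ℕ → EuclideanSpace ℝ (Fin n)) (t : ℕ → ℝ)
    (fhat : ℕ → EuclideanSpace ℝ (Fin n) → ℝ)
    (ht1 : t 1 = 1)
    (htrec : ∀ k ≥ 1, t (k + 1) = (1 + Real.sqrt (1 + 4 * t k ^ 2)) / 2)
    (hy1 : y 1 = x 0)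
    (hxmin : ∀ k ≥ 1, ∀ z,
      fhat k (x k) + L / 2 * ‖x k - y k‖ ^ 2 ≤ fhat k z + L / 2 * ‖z - y k‖ ^ 2)
    (hyrec : ∀ k ≥ 1, y (k + 1) = x k + ((t k - 1) / t (k + 1)) • (x k - x (k - 1)))
    (hmodel_convex : ∀ k ≥ 1, ConvexOn ℝ Set.univ (fhat k))
    (hmodel_lower : ∀ k ≥ 1, ∀ z,
      f (y k) + ⟪gradient f (y k), z - y k⟫ ≤ fhat k z)
    (hmodel_upper : ∀ k ≥ 1, ∀ z, fhat k z ≤ f z) :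
    ∀ k ≥ 1, f (x k) - f xstar ≤ L * ‖x 0 - xstar‖ ^ 2 / (2 * t k ^ 2) := by
  -- main per-iteration inequality
  have main : ∀ k ≥ 1, ∀ z,
      f (x k) + L / 2 * ‖z - x k‖ ^ 2 ≤ f z + L / 2 * ‖z - y k‖ ^ 2 := by
    intro k hk z
    have h1 := apbm_descent hL f hdiff hsmooth (y k) (x k)
    have h2 := hmodel_lower k hk (x k)
    have h3 := apbm_prox_strong hL (fhat k) (hmodel_convex k hk) (y k) (x k)
      (hxmin k hk) z
    have h4 := hmodel_upper k hk z
    linarith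
  -- t k ≥ 1 for k ≥ 1
  have ht_ge : ∀ k ≥ 1, 1 ≤ t k := by
    intro k hk
    induction k with
    | zero => omega
    | succ k ih =>
      rcases Nat.lt_or_ge k 1 with h | h
      · interval_cases k
        rw [ht1]
      · have hk1 := ih h
        rw [htrec k h]
        have h1 : (1:ℝ) ≤ 1 + 4 * t k ^ 2 := by nlinarith
        have : (1:ℝ) ≤ Real.sqrt (1 + 4 * t k ^ 2) := by
          nlinarith [Real.sq_sqrt (show (0:ℝ) ≤ 1 + 4 * t k ^ 2 by positivity),
            Real.sqrt_nonneg (1 + 4 * t k ^ 2), sq_nonneg (t k)]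
        linarith
  -- recursion identity: t(k+1)^2 = t(k+1) + t k ^2
  have htsq : ∀ k ≥ 1, t (k + 1) ^ 2 = t (k + 1) + t k ^ 2 := by
    intro k hk
    have h1 : (0:ℝ) ≤ 1 + 4 * t k ^ 2 := by positivity
    have h2 : Real.sqrt (1 + 4 * t k ^ 2) ^ 2 = 1 + 4 * t k ^ 2 := Real.sq_sqrt h1
    rw [htrec k hk]
    nlinarith [h2]
  -- the Lyapunov-type induction
  have key : ∀ k ≥ 1,
      t k ^ 2 * (f (x k) - f xstar)
        + L / 2 * ‖t k • x k - (t k - 1) • x (k - 1) - xstar‖ ^ 2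
      ≤ L / 2 * ‖x 0 - xstar‖ ^ 2 := by
    intro k hk
    induction k with
    | zero => omega
    | succ k ih =>
      rcases Nat.lt_or_ge k 1 with h | h
      · -- base case k+1 = 1
        interval_cases k
        have hb := main 1 le_rfl xstar
        rw [hy1] at hb
        have hu : (t 1) • x 1 - (t 1 - 1) • x 0 - xstar = x 1 - xstar := by
          rw [ht1]; simp
        rw [hu, ht1]
        have e1 : ‖xstar - x 1‖ = ‖x 1 - xstar‖ := norm_sub_rev _ _
        have e2 : ‖xstar - x 0‖ = ‖x 0 - xstar‖ := norm_sub_rev _ _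
        rw [e1, e2] at hb
        nlinarith [hb]
      · -- inductive step, k ≥ 1
        have ihk := ih h
        simp only [Nat.add_sub_cancel]
        set T := t (k + 1) with hT
        set τ := t k with hτ
        have hT1 : 1 ≤ T := ht_ge (k + 1) (by omega)
        have hT0 : T ≠ 0 := by linarith
        have hTpos : 0 < T := by linarith
        have hsq : T ^ 2 = T + τ ^ 2 := htsq k h
        set z : EuclideanSpace ℝ (Fin n) := x k + T⁻¹ • (xstar - x k) with hz
        set u0 : EuclideanSpace ℝ (Fin n) := τ • x k - (τ - 1) • x (k - 1) - xstar with hu0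
        set u1 : EuclideanSpace ℝ (Fin n) :=
          T • x (k + 1) - (T - 1) • x k - xstar with hu1
        -- z as a convex combination
        have hzcomb : z = (1 - T⁻¹) • x k + T⁻¹ • xstar := by
          rw [hz]; module
        have hTinv1 : T⁻¹ ≤ 1 := by
          rw [inv_le_one_iff₀]; right; exact hT1
        have hTinvpos : 0 < T⁻¹ := inv_pos.2 hTpos
        have hfz : f z ≤ (1 - T⁻¹) * f (x k) + T⁻¹ * f xstar := by
          rw [hzcomb]
          exact hconv.2 (Set.mem_univ _) (Set.mem_univ _) (by linarith) (le_of_lt hTinvpos)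
            (by ring)
        -- vector identities
        have hzy : z - y (k + 1) = (-T⁻¹) • u0 := by
          rw [hz, hyrec k h, hu0, ← hT, ← hτ]
          have : (τ - 1) / T = (τ - 1) * T⁻¹ := div_eq_mul_inv _ _
          rw [this]
          module
        have hzx : z - x (k + 1) = (-T⁻¹) • u1 := by
          rw [hz, hu1]
          match_scalars <;> field_simp <;> ring
        have hny : ‖z - y (k + 1)‖ ^ 2 = T⁻¹ ^ 2 * ‖u0‖ ^ 2 := by
          rw [hzy, norm_smul, Real.norm_eq_abs, abs_neg, abs_of_pos hTinvpos]
          ring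
        have hnx : ‖z - x (k + 1)‖ ^ 2 = T⁻¹ ^ 2 * ‖u1‖ ^ 2 := by
          rw [hzx, norm_smul, Real.norm_eq_abs, abs_neg, abs_of_pos hTinvpos]
          ring
        have hmain := main (k + 1) (by omega) z
        rw [hny, hnx] at hmain
        have hT2 : (0:ℝ) ≤ T ^ 2 := sq_nonneg T
        have key2 : T ^ 2 * f (x (k + 1)) + L / 2 * ‖u1‖ ^ 2
            ≤ T ^ 2 * f z + L / 2 * ‖u0‖ ^ 2 := by
          have hA := mul_le_mul_of_nonneg_left hmain hT2
          have e1 : T ^ 2 * (f (x (k + 1)) + L / 2 * (T⁻¹ ^ 2 * ‖u1‖ ^ 2))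
              = T ^ 2 * f (x (k + 1)) + L / 2 * ‖u1‖ ^ 2 := by
            field_simp
          have e2 : T ^ 2 * (f z + L / 2 * (T⁻¹ ^ 2 * ‖u0‖ ^ 2))
              = T ^ 2 * f z + L / 2 * ‖u0‖ ^ 2 := by
            field_simp
          rw [e1, e2] at hA
          exact hA
        have key3 : T ^ 2 * f z ≤ τ ^ 2 * f (x k) + T * f xstar := by
          have hB := mul_le_mul_of_nonneg_left hfz hT2
          have e : T ^ 2 * ((1 - T⁻¹) * f (x k) + T⁻¹ * f xstar)
              = (T ^ 2 - T) * f (x k) + T * f xstar := by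
            field_simp
          rw [e] at hB
          have hTτ : T ^ 2 - T = τ ^ 2 := by linarith
          rw [hTτ] at hB
          exact hB
        have hfsplit : T ^ 2 * f xstar = T * f xstar + τ ^ 2 * f xstar := by
          rw [hsq]; ring
        have hexp : T ^ 2 * (f (x (k + 1)) - f xstar)
            = T ^ 2 * f (x (k + 1)) - T ^ 2 * f xstar := by ring
        have hexp2 : τ ^ 2 * (f (x k) - f xstar)
            = τ ^ 2 * f (x k) - τ ^ 2 * f xstar := by ring
        rw [hexp]
        linarith
  intro k hk
  have hk1 := ht_ge k hk
  have hkey := key k hk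
  have htkpos : (0:ℝ) < t k := by linarith
  have hpos : (0:ℝ) < 2 * t k ^ 2 := by positivity
  rw [le_div_iff₀ hpos]
  nlinarith [sq_nonneg ‖t k • x k - (t k - 1) • x (k - 1) - xstar‖]
end

section
/- Let f : ℝⁿ → ℝ be convex and differentiable and let L > 0. Let {y^k}_{k≥1} and {x^k}_{k≥1} be points of ℝⁿ and define the two-cut models recursively by f̂¹(x) = f(y¹) + ⟨∇f(y¹), x − y¹⟩ and, for k ≥ 1, f̂^{k+1}(x) = max{ f̂^k(x^k) + ⟨L(y^k − x^k), x − x^k⟩, f(y^{k+1}) + ⟨∇f(y^{k+1}), x − y^{k+1}⟩ }. Assume that for each k ≥ 1, x^k is a global minimizer of x ↦ f̂^k(x) + (L/2)‖x − y^k‖². Then for every k ≥ 1: (a) f̂^k is convex; (b) f̂^k(x) ≥ f(y^k) + ⟨∇f(y^k), x − y^k⟩ for all x; (c) f̂^k(x) ≤ f(x) for all x. -/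
open scoped RealInnerProductSpace

lemma affine_convexOn {n : ℕ} (c : ℝ) (v p : EuclideanSpace ℝ (Fin n)) :
    ConvexOn ℝ Set.univ (fun z => c + ⟪v, z - p⟫) := by
  refine ⟨convex_univ, ?_⟩
  intro a _ b _ s t hs ht hst
  simp only [smul_eq_mul, inner_sub_right, inner_add_right, inner_smul_right]
  apply le_of_eq
  linear_combination (inner ℝ v p - c) * hst

lemma grad_ineq {n : ℕ} (f : EuclideanSpace ℝ (Fin n) → ℝ)
    (hconv : ConvexOn ℝ Set.univ f) (hdiff : Differentiable ℝ f)
    (a z : EuclideanSpace ℝ (Fin n)) :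
    f a + ⟪gradient f a, z - a⟫ ≤ f z := by
  set v := z - a with hv
  have hF : HasFDerivAt f ((InnerProductSpace.toDual ℝ _) (gradient f a)) a :=
    hasGradientAt_iff_hasFDerivAt.1 (hdiff a).hasGradientAt
  have h1 : HasDerivAt (fun t : ℝ => a + t • v) v 0 := by
    simpa using ((hasDerivAt_id (0:ℝ)).smul_const v).const_add a
  have hF' : HasFDerivAt f ((InnerProductSpace.toDual ℝ _) (gradient f a)) (a + (0:ℝ) • v) := by
    simpa using hF
  have hline : HasDerivAt (fun t : ℝ => f (a + t • v)) (⟪gradient f a, v⟫) 0 := by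
    exact hF'.comp_hasDerivAt 0 h1
  have hslope : Filter.Tendsto (slope (fun t : ℝ => f (a + t • v)) 0) (nhdsWithin 0 (Set.Ioi 0))
      (nhds (⟪gradient f a, v⟫)) :=
    ((hasDerivAt_iff_tendsto_slope).1 hline).mono_left
      (nhdsWithin_mono 0 (fun t ht => ne_of_gt ht))
  have hbd : ∀ t ∈ Set.Ioc (0:ℝ) 1, slope (fun t : ℝ => f (a + t • v)) 0 t ≤ f z - f a := by
    intro t ht
    have hcomb : f (a + t • v) ≤ (1 - t) * f a + t * f z := by
      have := hconv.2 (Set.mem_univ a) (Set.mem_univ z) (by linarith [ht.2] : (0:ℝ) ≤ 1 - t)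
        (le_of_lt ht.1) (by ring)
      have heq : (1 - t) • a + t • z = a + t • v := by
        rw [hv]; module
      simpa [heq] using this
    rw [slope_def_field]
    simp only [zero_smul, add_zero, sub_zero]
    rw [div_le_iff₀ ht.1]
    nlinarith [ht.1, hcomb]
  have : ⟪gradient f a, v⟫ ≤ f z - f a := by
    refine le_of_tendsto hslope ?_
    filter_upwards [Ioc_mem_nhdsGT_of_mem (by norm_num : (0:ℝ) ∈ Set.Ico (0:ℝ) 1)] with t ht
    exact hbd t ht
  linarith

lemma prox_subgrad {n : ℕ} {L : ℝ} (hL : 0 < L) {g : EuclideanSpace ℝ (Fin n) → ℝ}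
    (hg : ConvexOn ℝ Set.univ g) (p q : EuclideanSpace ℝ (Fin n))
    (hmin : ∀ z, g p + L / 2 * ‖p - q‖ ^ 2 ≤ g z + L / 2 * ‖z - q‖ ^ 2)
    (z : EuclideanSpace ℝ (Fin n)) :
    g p + ⟪L • (q - p), z - p⟫ ≤ g z := by
  set w := z - p with hw
  have key : ∀ t ∈ Set.Ioc (0:ℝ) 1,
      g p + ⟪L • (q - p), w⟫ ≤ g z + (L / 2 * ‖w‖ ^ 2) * t := by
    intro t ht
    have hcomb : g (p + t • w) ≤ (1 - t) * g p + t * g z := by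
      have := hg.2 (Set.mem_univ p) (Set.mem_univ z) (by linarith [ht.2] : (0:ℝ) ≤ 1 - t)
        (le_of_lt ht.1) (by ring)
      have heq : (1 - t) • p + t • z = p + t • w := by rw [hw]; module
      simpa [heq] using this
    have hm := hmin (p + t • w)
    have hnorm : ‖p + t • w - q‖ ^ 2 = ‖p - q‖ ^ 2 + 2 * (t * ⟪p - q, w⟫) + t ^ 2 * ‖w‖ ^ 2 := by
      have : p + t • w - q = (p - q) + t • w := by abel
      rw [this, norm_add_sq_real, real_inner_smul_right, norm_smul, mul_pow]
      simp only [Real.norm_eq_abs, sq_abs]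
    have hip : ⟪L • (q - p), w⟫ = - (L * ⟪p - q, w⟫) := by
      rw [real_inner_smul_left]
      rw [show q - p = -(p - q) by abel, inner_neg_left]
      ring
    rw [hip]
    nlinarith [hm, hcomb, hnorm, ht.1, ht.2, sq_nonneg t]
  have hc : 0 ≤ L / 2 * ‖w‖ ^ 2 := by positivity
  refine le_of_forall_pos_le_add ?_
  intro ε hε
  set c := L / 2 * ‖w‖ ^ 2 with hcdef
  have ht1 : (0:ℝ) < min 1 (ε / (c + 1)) := lt_min one_pos (by positivity)
  have := key (min 1 (ε / (c + 1))) ⟨ht1, min_le_left _ _⟩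
  have hle : c * min 1 (ε / (c + 1)) ≤ ε := by
    have h2 : min 1 (ε / (c + 1)) ≤ ε / (c + 1) := min_le_right _ _
    have : c * min 1 (ε / (c + 1)) ≤ c * (ε / (c + 1)) := by
      apply mul_le_mul_of_nonneg_left h2 hc
    calc c * min 1 (ε / (c + 1)) ≤ c * (ε / (c + 1)) := this
      _ ≤ ε := by
          rw [mul_comm, div_mul_eq_mul_div, div_le_iff₀ (by positivity : (0:ℝ) < c + 1)]
          nlinarith
  linarith

/-- The two-cut model, defined recursively by
`f̂¹(x) = f(y¹) + ⟨∇f(y¹), x − y¹⟩` and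
`f̂^{k+1}(x) = max{ f̂^k(x^k) + ⟨L(y^k − x^k), x − x^k⟩, f(y^{k+1}) + ⟨∇f(y^{k+1}), x − y^{k+1}⟩ }`,
where `x^k` globally minimizes `x ↦ f̂^k(x) + (L/2)‖x − y^k‖²`, satisfies Assumption 1 for
every `k ≥ 1`. -/
theorem two_cut_model_assumption {n : ℕ} {L : ℝ} (hL : 0 < L)
    (f : EuclideanSpace ℝ (Fin n) → ℝ)
    (hconv : ConvexOn ℝ Set.univ f)
    (hdiff : Differentiable ℝ f)
    (x y : ℕ → EuclideanSpace ℝ (Fin n))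
    (fhat : ℕ → EuclideanSpace ℝ (Fin n) → ℝ)
    (hfhat1 : ∀ z, fhat 1 z = f (y 1) + ⟪gradient f (y 1), z - y 1⟫)
    (hfhatrec : ∀ k ≥ 1, ∀ z, fhat (k + 1) z =
      max (fhat k (x k) + ⟪L • (y k - x k), z - x k⟫)
        (f (y (k + 1)) + ⟪gradient f (y (k + 1)), z - y (k + 1)⟫))
    (hxmin : ∀ k ≥ 1, ∀ z,
      fhat k (x k) + L / 2 * ‖x k - y k‖ ^ 2 ≤ fhat k z + L / 2 * ‖z - y k‖ ^ 2) :
    ∀ k ≥ 1,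
      ConvexOn ℝ Set.univ (fhat k) ∧
        (∀ z, f (y k) + ⟪gradient f (y k), z - y k⟫ ≤ fhat k z) ∧
        (∀ z, fhat k z ≤ f z) := by
  intro k hk
  induction k with
  | zero => omega
  | succ m ih =>
    rcases Nat.eq_zero_or_pos m with hm | hm
    · subst hm
      refine ⟨?_, ?_, ?_⟩
      · have heq : fhat 1 = fun z => f (y 1) + ⟪gradient f (y 1), z - y 1⟫ := funext hfhat1
        rw [show (0 + 1 : ℕ) = 1 from rfl, heq]
        exact affine_convexOn _ _ _
      · intro z; rw [show (0 + 1 : ℕ) = 1 from rfl, hfhat1 z]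
      · intro z
        rw [show (0 + 1 : ℕ) = 1 from rfl, hfhat1 z]
        exact grad_ineq f hconv hdiff (y 1) z
    · obtain ⟨hc, _, hub⟩ := ih hm
      refine ⟨?_, ?_, ?_⟩
      · have heq : fhat (m + 1) = fun z =>
            max (fhat m (x m) + ⟪L • (y m - x m), z - x m⟫)
              (f (y (m + 1)) + ⟪gradient f (y (m + 1)), z - y (m + 1)⟫) :=
          funext (hfhatrec m hm)
        rw [heq]
        exact (affine_convexOn _ _ _).sup (affine_convexOn _ _ _)
      · intro z
        rw [hfhatrec m hm z]
        exact le_max_right _ _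
      · intro z
        rw [hfhatrec m hm z]
        apply max_le
        · exact le_trans (prox_subgrad hL hc (x m) (y m) (hxmin m hm) z) (hub z)
        · exact grad_ineq f hconv hdiff (y (m + 1)) z
end

section
/- Let f : ℝⁿ → ℝ be convex, differentiable, and L-smooth with L > 0. Let y ∈ ℝⁿ and let f̂ : ℝⁿ → ℝ satisfy: f̂ is convex, f̂(x) ≥ f(y) + ⟨∇f(y), x − y⟩ for all x, and f̂(x) ≤ f(x) for all x. Let x⁺ be a global minimizer of x ↦ f̂(x) + (L/2)‖x − y‖². Then for every x ∈ ℝⁿ, f(x⁺) − f(x) ≤ (L/2)‖x − y‖² − (L/2)‖x − x⁺‖². -/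
open scoped RealInnerProductSpace

section Aux

variable {E : Type*} [NormedAddCommGroup E] [InnerProductSpace ℝ E] [CompleteSpace E]

/-- Descent lemma: an `L`-smooth function is bounded above by its quadratic upper model. -/
lemma descent_lemma' {L : ℝ} (hL : 0 < L) (f : E → ℝ) (hdiff : Differentiable ℝ f)
    (hsmooth : ∀ u v, ‖gradient f u - gradient f v‖ ≤ L * ‖u - v‖) (y v : E) :
    f (y + v) ≤ f y + ⟪gradient f y, v⟫ + L / 2 * ‖v‖ ^ 2 := by
  set g' : ℝ → ℝ := fun t => ⟪gradient f (y + t • v), v⟫ with hg'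
  have hgrad_cont : Continuous fun z => gradient f z := by
    refine LipschitzWith.continuous (K := L.toNNReal) (LipschitzWith.of_dist_le_mul ?_)
    intro a b
    rw [dist_eq_norm, dist_eq_norm]
    simpa [Real.coe_toNNReal _ hL.le] using hsmooth a b
  have hcont : Continuous g' := by
    exact Continuous.inner (hgrad_cont.comp (by continuity)) continuous_const
  have hderiv : ∀ t : ℝ, HasDerivAt (fun t : ℝ => f (y + t • v)) (g' t) t := by
    intro t
    have h1 : HasDerivAt (fun t : ℝ => y + t • v) v t := by
      simpa using ((hasDerivAt_id t).smul_const v).const_add y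
    have h2 : HasFDerivAt f (InnerProductSpace.toDual ℝ E (gradient f (y + t • v))) (y + t • v) :=
      hasGradientAt_iff_hasFDerivAt.mp (hdiff _).hasGradientAt
    have h3 := h2.comp_hasDerivAt t h1
    simpa [g', InnerProductSpace.toDual_apply_apply, Function.comp_def] using h3
  have hint : IntervalIntegrable g' MeasureTheory.volume 0 1 := hcont.intervalIntegrable _ _
  have heq : ∫ t in (0:ℝ)..1, g' t = f (y + v) - f y := by
    have := intervalIntegral.integral_eq_sub_of_hasDerivAt (f := fun t : ℝ => f (y + t • v))
      (f' := g') (a := 0) (b := 1) (fun t _ => hderiv t) hint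
    simpa using this
  have hbound : ∀ t ∈ Set.Icc (0:ℝ) 1, g' t ≤ ⟪gradient f y, v⟫ + t * (L * ‖v‖ ^ 2) := by
    intro t ht
    have h3 : g' t - ⟪gradient f y, v⟫ = ⟪gradient f (y + t • v) - gradient f y, v⟫ := by
      simp [g', inner_sub_left]
    have h4 := real_inner_le_norm (gradient f (y + t • v) - gradient f y) v
    have h5 := hsmooth (y + t • v) y
    have h6 : ‖y + t • v - y‖ = t * ‖v‖ := by
      simp [norm_smul, abs_of_nonneg ht.1]
    rw [h6] at h5
    nlinarith [norm_nonneg v, norm_nonneg (gradient f (y + t • v) - gradient f y)]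
  have hintbound : ∫ t in (0:ℝ)..1, g' t
      ≤ ∫ t in (0:ℝ)..1, (⟪gradient f y, v⟫ + t * (L * ‖v‖ ^ 2)) := by
    refine intervalIntegral.integral_mono_on (by norm_num) hint ?_ hbound
    exact (Continuous.intervalIntegrable (by continuity) _ _)
  have hrhs : ∫ t in (0:ℝ)..1, (⟪gradient f y, v⟫ + t * (L * ‖v‖ ^ 2))
      = ⟪gradient f y, v⟫ + L / 2 * ‖v‖ ^ 2 := by
    rw [intervalIntegral.integral_add (intervalIntegrable_const)
      (((by fun_prop : Continuous fun t : ℝ => t * (L * ‖v‖ ^ 2))).intervalIntegrable _ _),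
      intervalIntegral.integral_mul_const, integral_id]
    simp; ring
  rw [heq] at hintbound
  rw [hrhs] at hintbound
  linarith

/-- Growth at the minimizer of a convex function plus a quadratic. -/
lemma strong_min' {L : ℝ} (hL : 0 < L) (fhat : E → ℝ) (hconv : ConvexOn ℝ Set.univ fhat)
    (y xplus : E)
    (hxplus : ∀ z, fhat xplus + L / 2 * ‖xplus - y‖ ^ 2 ≤ fhat z + L / 2 * ‖z - y‖ ^ 2)
    (x : E) :
    fhat xplus + L / 2 * ‖xplus - y‖ ^ 2 + L / 2 * ‖x - xplus‖ ^ 2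
      ≤ fhat x + L / 2 * ‖x - y‖ ^ 2 := by
  set A := ‖x - y‖ ^ 2
  set B := ‖xplus - y‖ ^ 2
  set C := ‖x - xplus‖ ^ 2
  have h : ∀ t ∈ Set.Ioo (0:ℝ) 1,
      fhat xplus + L / 2 * B + L / 2 * C ≤ fhat x + L / 2 * A + L / 2 * t * C := by
    rintro t ⟨ht0, ht1⟩
    have hz := hconv.2 (Set.mem_univ x) (Set.mem_univ xplus) ht0.le (by linarith)
      (by ring : t + (1 - t) = 1)
    simp only [smul_eq_mul] at hz
    have h1 : (t • x + (1 - t) • xplus) - y = t • (x - y) + (1 - t) • (xplus - y) := by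
      module
    have h2 : x - xplus = (x - y) - (xplus - y) := by abel
    have hnorm : ‖(t • x + (1 - t) • xplus) - y‖ ^ 2
        = t * A + (1 - t) * B - t * (1 - t) * C := by
      rw [h1]
      have hC : C = ‖(x - y) - (xplus - y)‖ ^ 2 := by rw [← h2]
      rw [hC]
      rw [norm_add_sq_real, @norm_sub_sq_real, norm_smul, norm_smul,
        real_inner_smul_left, real_inner_smul_right, Real.norm_eq_abs, Real.norm_eq_abs,
        abs_of_nonneg ht0.le, abs_of_nonneg (by linarith : (0:ℝ) ≤ 1 - t), mul_pow, mul_pow]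
      ring
    have hx := hxplus (t • x + (1 - t) • xplus)
    rw [hnorm] at hx
    have key : t * (fhat xplus + L / 2 * B + L / 2 * (1 - t) * C)
        ≤ t * (fhat x + L / 2 * A) := by nlinarith
    have := le_of_mul_le_mul_left (by linarith [key] : t * (fhat xplus + L / 2 * B + L / 2 * (1 - t) * C) ≤ t * (fhat x + L / 2 * A)) ht0
    nlinarith
  have hlim : Filter.Tendsto (fun t : ℝ => fhat x + L / 2 * A + L / 2 * t * C)
      (nhdsWithin 0 (Set.Ioi 0)) (nhds (fhat x + L / 2 * A)) := by
    have hc : Continuous fun t : ℝ => fhat x + L / 2 * A + L / 2 * t * C := by continuity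
    have := (hc.tendsto 0).mono_left (nhdsWithin_le_nhds (s := Set.Ioi (0:ℝ)))
    simpa using this
  refine ge_of_tendsto hlim ?_
  filter_upwards [Ioo_mem_nhdsGT_of_mem (by norm_num : (0:ℝ) ∈ Set.Ico 0 1)] with t ht
  exact h t ht

end Aux

/-- One-step descent inequality for the proximal bundle step: if `f̂` satisfies
Assumption 1 at `y` and `x⁺` globally minimizes `x ↦ f̂(x) + (L/2)‖x − y‖²`, then
`f(x⁺) − f(x) ≤ (L/2)‖x − y‖² − (L/2)‖x − x⁺‖²` for every `x`. -/
theorem bundle_step_descent {n : ℕ} {L : ℝ} (hL : 0 < L)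
    (f : EuclideanSpace ℝ (Fin n) → ℝ)
    (hconv : ConvexOn ℝ Set.univ f)
    (hdiff : Differentiable ℝ f)
    (hsmooth : ∀ u v, ‖gradient f u - gradient f v‖ ≤ L * ‖u - v‖)
    (y : EuclideanSpace ℝ (Fin n))
    (fhat : EuclideanSpace ℝ (Fin n) → ℝ)
    (hfhat_convex : ConvexOn ℝ Set.univ fhat)
    (hfhat_lower : ∀ z, f y + ⟪gradient f y, z - y⟫ ≤ fhat z)
    (hfhat_upper : ∀ z, fhat z ≤ f z)
    (xplus : EuclideanSpace ℝ (Fin n))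
    (hxplus : ∀ z, fhat xplus + L / 2 * ‖xplus - y‖ ^ 2 ≤ fhat z + L / 2 * ‖z - y‖ ^ 2) :
    ∀ x, f xplus - f x ≤ L / 2 * ‖x - y‖ ^ 2 - L / 2 * ‖x - xplus‖ ^ 2 := by
  intro x
  have hdesc := descent_lemma' hL f hdiff hsmooth y (xplus - y)
  rw [add_sub_cancel] at hdesc
  have hlow := hfhat_lower xplus
  have hmin := strong_min' hL fhat hfhat_convex y xplus hxplus x
  have hup := hfhat_upper x
  linarith
end
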